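/- Let k, l, p be positive integers and define f : ℝ^p → ℝ by f(y₁,…,y_p) = (y₁^{2kl} + … + y_p^{2kl})^{1/l}. Then f is of class C^k on ℝ^p. -/

import Mathlib

open Finset Filter Topology

private lemma prod_update_pow {p : ℕ} (y : Fin p → ℝ) (a : Fin p → ℕ) (m : Fin p) (c : ℕ) :
    ∏ j, y j ^ (Function.update a m c j) = y m ^ c * ∏ j ∈ Finset.univ.erase m, y j ^ a j := by
  rw [← Finset.mul_prod_erase Finset.univ _ (Finset.mem_univ m), Function.update_self]
  congr 1
  exact Finset.prod_congr rfl fun j hj => by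
    rw [Function.update_of_ne (Finset.ne_of_mem_erase hj)]

private lemma sum_update_eq {p : ℕ} (a : Fin p → ℕ) (m : Fin p) (c : ℕ) :
    ∑ i, Function.update a m c i = c + ∑ i ∈ Finset.univ.erase m, a i := by
  rw [← Finset.add_sum_erase Finset.univ _ (Finset.mem_univ m), Function.update_self]
  congr 1
  exact Finset.sum_congr rfl fun j hj => by
    rw [Function.update_of_ne (Finset.ne_of_mem_erase hj)]

private lemma sum_split {p : ℕ} (a : Fin p → ℕ) (m : Fin p) :
    ∑ i, a i = a m + ∑ i ∈ Finset.univ.erase m, a i :=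
  (Finset.add_sum_erase Finset.univ a (Finset.mem_univ m)).symm

private lemma val0 {p N : ℕ} (hN : 0 < N) (b : Fin p → ℕ) (r : ℝ)
    (h : 0 < (∑ i, b i : ℝ) + N * r) :
    (∏ i, (0:ℝ) ^ b i) * (0:ℝ) ^ r = 0 := by
  by_cases hb : ∃ i, b i ≠ 0
  · obtain ⟨i, hi⟩ := hb
    rw [Finset.prod_eq_zero (Finset.mem_univ i) (zero_pow hi), zero_mul]
  · push_neg at hb
    have hsum : (∑ i, (b i : ℝ)) = 0 := by simp [hb]
    rw [hsum, zero_add] at h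
    have hN' : (0:ℝ) < N := by exact_mod_cast hN
    have hr : 0 < r := by nlinarith
    rw [Real.zero_rpow hr.ne', mul_zero]

private lemma key_bound {p N : ℕ} (hp : 0 < p) (hNe : Even N) {q : ℝ} (hq : q ≤ 1)
    (a : Fin p → ℕ) {y : Fin p → ℝ} (hy : y ≠ 0) :
    |(∏ i, y i ^ a i) * (∑ i, y i ^ N) ^ q| ≤ p * ‖y‖ ^ ((∑ i, a i : ℝ) + N * q) := by
  haveI : Nonempty (Fin p) := Fin.pos_iff_nonempty.mp hp
  have hyn : (0:ℝ) < ‖y‖ := norm_pos_iff.mpr hy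
  have hS0 : (0:ℝ) ≤ ∑ i, y i ^ N := Finset.sum_nonneg fun i _ => hNe.pow_nonneg _
  have hp1 : (1:ℝ) ≤ p := by exact_mod_cast hp
  have habs : ∀ i, |y i| ≤ ‖y‖ := fun i => by
    rw [← Real.norm_eq_abs]; exact norm_le_pi_norm y i
  have h1 : |∏ i, y i ^ a i| ≤ ‖y‖ ^ (∑ i, a i) := by
    rw [Finset.abs_prod, ← Finset.prod_pow_eq_pow_sum]
    refine Finset.prod_le_prod (fun i _ => abs_nonneg _) fun i _ => ?_
    rw [abs_pow]
    exact pow_le_pow_left₀ (abs_nonneg _) (habs i) _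
  have hNy : ‖y‖ ^ N = ‖y‖ ^ ((N:ℝ)) := (Real.rpow_natCast _ _).symm
  have h2 : (∑ i, y i ^ N) ^ q ≤ p * ‖y‖ ^ ((N:ℝ) * q) := by
    rcases le_or_gt 0 q with hq0 | hq0
    · have hS : (∑ i, y i ^ N) ≤ (p:ℝ) * ‖y‖ ^ N := by
        calc (∑ i, y i ^ N) ≤ ∑ _i : Fin p, ‖y‖ ^ N :=
              Finset.sum_le_sum fun i _ => by
                rw [← hNe.pow_abs (y i)]
                exact pow_le_pow_left₀ (abs_nonneg _) (habs i) _
          _ = (p:ℝ) * ‖y‖ ^ N := by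
              rw [Finset.sum_const, Finset.card_univ, Fintype.card_fin, nsmul_eq_mul]
      calc (∑ i, y i ^ N) ^ q ≤ ((p:ℝ) * ‖y‖ ^ N) ^ q := Real.rpow_le_rpow hS0 hS hq0
        _ = (p:ℝ) ^ q * (‖y‖ ^ N) ^ q := Real.mul_rpow (by positivity) (by positivity)
        _ ≤ (p:ℝ) * ‖y‖ ^ ((N:ℝ) * q) := by
            have e1 : ((‖y‖:ℝ) ^ N) ^ q = ‖y‖ ^ ((N:ℝ) * q) := by
              rw [hNy, ← Real.rpow_mul hyn.le]
            rw [e1]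
            have e2 : (p:ℝ) ^ q ≤ p := by
              calc (p:ℝ) ^ q ≤ (p:ℝ) ^ (1:ℝ) := Real.rpow_le_rpow_of_exponent_le hp1 hq
                _ = p := Real.rpow_one _
            exact mul_le_mul_of_nonneg_right e2 (Real.rpow_nonneg hyn.le _)
    · obtain ⟨i0, -, hi0⟩ := Finset.exists_mem_eq_sup (Finset.univ : Finset (Fin p))
        Finset.univ_nonempty fun i => ‖y i‖₊
      have hynorm : ‖y‖ = |y i0| := by
        rw [Pi.norm_def, hi0, coe_nnnorm, Real.norm_eq_abs]
      have hS : ‖y‖ ^ N ≤ (∑ i, y i ^ N) := by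
        rw [hynorm, hNe.pow_abs]
        exact Finset.single_le_sum (f := fun i => y i ^ N) (fun i _ => hNe.pow_nonneg (y i)) (Finset.mem_univ i0)
      calc (∑ i, y i ^ N) ^ q ≤ (‖y‖ ^ N) ^ q :=
            Real.rpow_le_rpow_of_nonpos (pow_pos hyn _) hS hq0.le
        _ = ‖y‖ ^ ((N:ℝ) * q) := by rw [hNy, ← Real.rpow_mul hyn.le]
        _ ≤ p * ‖y‖ ^ ((N:ℝ) * q) :=
            le_mul_of_one_le_left (Real.rpow_nonneg hyn.le _) hp1
  calc |(∏ i, y i ^ a i) * (∑ i, y i ^ N) ^ q|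
      = |∏ i, y i ^ a i| * (∑ i, y i ^ N) ^ q := by
        rw [abs_mul, abs_of_nonneg (Real.rpow_nonneg hS0 q)]
    _ ≤ ‖y‖ ^ (∑ i, a i) * ((p:ℝ) * ‖y‖ ^ ((N:ℝ) * q)) :=
        mul_le_mul h1 h2 (Real.rpow_nonneg hS0 q) (pow_nonneg hyn.le _)
    _ = p * ‖y‖ ^ ((∑ i, a i : ℝ) + N * q) := by
        rw [Real.rpow_add hyn, ← Real.rpow_natCast ‖y‖ (∑ i, a i)]
        push_cast
        ring

private lemma tendsto_helper {p : ℕ} {β : ℝ} (hβ : 0 < β) (C : ℝ) :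
    Tendsto (fun y : Fin p → ℝ => C * ‖y‖ ^ β) (𝓝 0) (𝓝 0) := by
  have h1 : Tendsto (fun x : ℝ => x ^ β) (𝓝 0) (𝓝 0) := by
    have h := Real.continuousAt_rpow_const 0 β (Or.inr hβ.le)
    simpa [ContinuousAt, Real.zero_rpow hβ.ne'] using h
  have h2 : Tendsto (fun y : Fin p → ℝ => ‖y‖ ^ β) (𝓝 0) (𝓝 0) :=
    h1.comp tendsto_norm_zero
  simpa using h2.const_mul C

private noncomputable def Gd (p N : ℕ) (q : ℝ) (a : Fin p → ℕ) (m : Fin p)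
    (y : Fin p → ℝ) : ℝ :=
  (a m : ℝ) * ((∏ i, y i ^ (Function.update a m (a m - 1) i)) * (∑ i, y i ^ N) ^ q)
    + q * N * ((∏ i, y i ^ (Function.update a m (a m + (N - 1)) i)) * (∑ i, y i ^ N) ^ (q - 1))

private lemma key (p N : ℕ) (hp : 0 < p) (hN : 2 ≤ N) (hNe : Even N) :
    ∀ (n : ℕ) (q : ℝ) (a : Fin p → ℕ), q ≤ 1 → (n : ℝ) < (∑ i, a i : ℝ) + N * q →
    ContDiff ℝ n (fun y : Fin p → ℝ => (∏ i, y i ^ a i) * (∑ i, y i ^ N) ^ q) := by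
  haveI : Nonempty (Fin p) := Fin.pos_iff_nonempty.mp hp
  have hN0 : 0 < N := by omega
  have hS0 : ∀ y : Fin p → ℝ, (0:ℝ) ≤ ∑ i, y i ^ N :=
    fun y => Finset.sum_nonneg fun i _ => hNe.pow_nonneg _
  have hSne : ∀ y : Fin p → ℝ, y ≠ 0 → (∑ i, y i ^ N) ≠ 0 := by
    intro y hy
    have hex : ∃ i, y i ≠ 0 := by
      by_contra h; push_neg at h; exact hy (funext h)
    obtain ⟨i, hi⟩ := hex
    have : 0 < ∑ j, y j ^ N :=
      Finset.sum_pos' (f := fun j => y j ^ N) (fun j _ => hNe.pow_nonneg (y j))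
        ⟨i, Finset.mem_univ i, hNe.pow_pos hi⟩
    exact this.ne'
  intro n
  induction n with
  | zero =>
    intro q a hq hε
    rw [Nat.cast_zero] at hε
    have hcont : Continuous fun y : Fin p → ℝ =>
        (∏ i, y i ^ a i) * (∑ i, y i ^ N) ^ q := by
      have hPc : Continuous fun y : Fin p → ℝ => ∏ i, y i ^ a i :=
        continuous_finset_prod _ fun i _ => (continuous_apply i).pow _
      have hSc : Continuous fun y : Fin p → ℝ => ∑ i, y i ^ N :=
        continuous_finset_sum _ fun i _ => (continuous_apply i).pow _
      rcases le_or_gt 0 q with hq0 | hq0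
      · exact hPc.mul (hSc.rpow_const fun y => Or.inr hq0)
      · rw [continuous_iff_continuousAt]
        intro y
        by_cases hy : y = 0
        · subst hy
          have hs : (∑ i : Fin p, (0 : Fin p → ℝ) i ^ N) = 0 := by
            simp [zero_pow hN0.ne']
          have hF0 : (∏ i, (0 : Fin p → ℝ) i ^ a i) * (∑ i, (0 : Fin p → ℝ) i ^ N) ^ q = 0 := by
            simp only [Pi.zero_apply] at hs ⊢
            rw [hs]
            exact val0 hN0 a q hε
          unfold ContinuousAt
          rw [show (fun y : Fin p → ℝ => (∏ i, y i ^ a i) * (∑ i, y i ^ N) ^ q) 0 = 0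
            from hF0]
          apply squeeze_zero_norm
            (a := fun z : Fin p → ℝ => p * ‖z‖ ^ ((∑ i, a i : ℝ) + N * q)) _
            (tendsto_helper hε _)
          intro z
          by_cases hz : z = 0
          · subst hz
            simp only [Pi.zero_apply] at hF0
            simp only [Pi.zero_apply]
            rw [hF0]
            simp only [norm_zero]
            positivity
          · have hb := key_bound hp hNe hq a hz
            rwa [Real.norm_eq_abs]
        · exact (hPc.continuousAt).mul
            ((hSc.continuousAt).rpow_const (Or.inl (hSne y hy)))
    simpa [contDiff_zero] using hcont
  | succ n ih =>
    intro q a hq hε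
    push_cast at hε
    have key1 : ∀ y, HasFDerivAt
        (fun y : Fin p → ℝ => (∏ i, y i ^ a i) * (∑ i, y i ^ N) ^ q)
        (∑ m, Gd p N q a m y •
          ContinuousLinearMap.proj (R := ℝ) (φ := fun _ : Fin p => ℝ) m) y := by
      intro y
      by_cases hy : y = 0
      · subst hy
        have hsum1 : ∀ (m : Fin p), (∑ i, a i : ℕ) ≤ (∑ i, Function.update a m (a m - 1) i) + 1 := by
          intro m
          rw [sum_update_eq, sum_split a m]
          omega
        have hsum2 : ∀ (m : Fin p),
            (∑ i, Function.update a m (a m + (N - 1)) i : ℕ) = (∑ i, a i) + (N - 1) := by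
          intro m
          rw [sum_update_eq, sum_split a m]
          omega
        have hD0 : (∑ m, Gd p N q a m (0 : Fin p → ℝ) •
            ContinuousLinearMap.proj (R := ℝ) (φ := fun _ : Fin p => ℝ) m) = 0 := by
          refine Finset.sum_eq_zero fun m _ => ?_
          have hG0 : Gd p N q a m (0 : Fin p → ℝ) = 0 := by
            unfold Gd
            simp only [Pi.zero_apply]
            have hs : (∑ _i : Fin p, (0:ℝ) ^ N) = 0 := by simp [zero_pow hN0.ne']
            rw [hs]
            rw [val0 hN0 _ q (by
              have h1 := hsum1 m
              have h1' : (∑ i, a i : ℝ) ≤ (∑ i, Function.update a m (a m - 1) i : ℝ) + 1 := by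
                exact_mod_cast h1
              linarith)]
            rw [val0 hN0 _ (q - 1) (by
              have h2c := congrArg (fun t : ℕ => (t : ℝ)) (hsum2 m)
              push_cast [Nat.cast_sub (by omega : 1 ≤ N)] at h2c
              rw [h2c]
              nlinarith)]
            ring
          rw [hG0, zero_smul]
        rw [hD0]
        have hs : (∑ i : Fin p, (0 : Fin p → ℝ) i ^ N) = 0 := by simp [zero_pow hN0.ne']
        have hF0 : (∏ i, (0 : Fin p → ℝ) i ^ a i) * (∑ i, (0 : Fin p → ℝ) i ^ N) ^ q = 0 := by
          simp only [Pi.zero_apply] at hs ⊢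
          rw [hs]
          exact val0 hN0 a q (by linarith)
        rw [hasFDerivAt_iff_tendsto]
        apply squeeze_zero
          (g := fun z : Fin p → ℝ => p * ‖z‖ ^ ((∑ i, a i : ℝ) + N * q - 1))
          (t₀ := 𝓝 0)
        · intro z
          positivity
        · intro z
          by_cases hz : z = 0
          · subst hz
            simp only [sub_zero, norm_zero, hF0, ContinuousLinearMap.zero_apply, sub_self]
            rw [inv_zero, zero_mul]
            positivity
          · have hb := key_bound hp hNe hq a hz
            have hyn : (0:ℝ) < ‖z‖ := norm_pos_iff.mpr hz
            simp only [sub_zero, hF0, ContinuousLinearMap.zero_apply]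
            rw [Real.norm_eq_abs]
            calc ‖z‖⁻¹ * |(∏ i, z i ^ a i) * (∑ i, z i ^ N) ^ q|
                ≤ ‖z‖⁻¹ * (p * ‖z‖ ^ ((∑ i, a i : ℝ) + N * q)) :=
                  mul_le_mul_of_nonneg_left hb (inv_nonneg.mpr (norm_nonneg z))
              _ = p * ‖z‖ ^ ((∑ i, a i : ℝ) + N * q - 1) := by
                  rw [Real.rpow_sub hyn, Real.rpow_one, div_eq_mul_inv]
                  ring
        · exact tendsto_helper (by linarith) _
      · have hSy := hSne y hy
        have hproj : ∀ i : Fin p, HasFDerivAt (fun z : Fin p → ℝ => z i)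
            (ContinuousLinearMap.proj (R := ℝ) (φ := fun _ : Fin p => ℝ) i) y :=
          fun i => hasFDerivAt_apply i y
        have hP : HasFDerivAt (fun z : Fin p → ℝ => ∏ i, z i ^ a i)
            (∑ m, ((a m : ℝ) * ∏ i, y i ^ (Function.update a m (a m - 1) i)) •
              ContinuousLinearMap.proj (R := ℝ) (φ := fun _ : Fin p => ℝ) m) y := by
          have h0 : ∀ i ∈ Finset.univ, HasFDerivAt (fun z : Fin p → ℝ => z i ^ a i)
              (((a i : ℝ) * y i ^ (a i - 1)) •
                ContinuousLinearMap.proj (R := ℝ) (φ := fun _ : Fin p => ℝ) i) y :=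
            fun i _ => (hasDerivAt_pow (a i) (y i)).comp_hasFDerivAt y (hproj i)
          have h := HasFDerivAt.finset_prod h0
          refine h.congr_fderiv ?_
          refine Finset.sum_congr rfl fun m _ => ?_
          rw [smul_smul]
          congr 1
          rcases Nat.eq_zero_or_pos (a m) with h0m | h0m
          · simp [h0m]
          · rw [prod_update_pow]
            ring
        have hSd : HasFDerivAt (fun z : Fin p → ℝ => ∑ i, z i ^ N)
            (∑ m, ((N:ℝ) * y m ^ (N - 1)) •
              ContinuousLinearMap.proj (R := ℝ) (φ := fun _ : Fin p => ℝ) m) y :=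
          HasFDerivAt.fun_sum fun i _ =>
            (hasDerivAt_pow N (y i)).comp_hasFDerivAt y (hproj i)
        have hSq : HasFDerivAt (fun z : Fin p → ℝ => (∑ i, z i ^ N) ^ q)
            ((q * (∑ i, y i ^ N) ^ (q - 1)) •
              ∑ m, ((N:ℝ) * y m ^ (N - 1)) •
                ContinuousLinearMap.proj (R := ℝ) (φ := fun _ : Fin p => ℝ) m) y :=
          hSd.rpow_const (Or.inl hSy)
        have h := hP.mul hSq
        refine h.congr_fderiv ?_
        refine ContinuousLinearMap.ext fun v => ?_
        simp only [ContinuousLinearMap.add_apply, ContinuousLinearMap.coe_smul',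
          Pi.smul_apply, ContinuousLinearMap.coe_sum', Finset.sum_apply,
          ContinuousLinearMap.proj_apply, smul_eq_mul]
        simp only [Finset.mul_sum]
        rw [← Finset.sum_add_distrib]
        refine Finset.sum_congr rfl fun m _ => ?_
        unfold Gd
        have hpp : (∏ i, y i ^ a i) = y m ^ a m * ∏ j ∈ Finset.univ.erase m, y j ^ a j :=
          (Finset.mul_prod_erase Finset.univ _ (Finset.mem_univ m)).symm
        rw [prod_update_pow y a m (a m + (N - 1)), hpp, pow_add]
        ring
    have key2 : ContDiff ℝ n fun y : Fin p → ℝ =>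
        ∑ m, Gd p N q a m y •
          ContinuousLinearMap.proj (R := ℝ) (φ := fun _ : Fin p => ℝ) m := by
      apply ContDiff.sum
      intro m _
      apply ContDiff.fun_smul _ contDiff_const
      have c1 : ContDiff ℝ n fun y : Fin p → ℝ =>
          (∏ i, y i ^ (Function.update a m (a m - 1) i)) * (∑ i, y i ^ N) ^ q := by
        apply ih q _ hq
        have h1 : (∑ i, a i : ℕ) ≤ (∑ i, Function.update a m (a m - 1) i) + 1 := by
          rw [sum_update_eq, sum_split a m]; omega
        have h1' : (∑ i, a i : ℝ) ≤ (∑ i, Function.update a m (a m - 1) i : ℝ) + 1 := by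
          exact_mod_cast h1
        linarith
      have c2 : ContDiff ℝ n fun y : Fin p → ℝ =>
          (∏ i, y i ^ (Function.update a m (a m + (N - 1)) i)) * (∑ i, y i ^ N) ^ (q - 1) := by
        apply ih (q - 1) _ (by linarith)
        have h2 : (∑ i, Function.update a m (a m + (N - 1)) i : ℕ) = (∑ i, a i) + (N - 1) := by
          rw [sum_update_eq, sum_split a m]; omega
        have h2c := congrArg (fun t : ℕ => (t : ℝ)) h2
        push_cast [Nat.cast_sub (by omega : 1 ≤ N)] at h2c
        rw [h2c]
        nlinarith
      exact (contDiff_const.mul c1).add (contDiff_const.mul c2)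
    have hcast : ((n + 1 : ℕ) : WithTop ℕ∞) = (n : WithTop ℕ∞) + 1 := by
      push_cast
      rfl
    rw [hcast, contDiff_succ_iff_fderiv]
    refine ⟨fun y => (key1 y).differentiableAt, ?_, ?_⟩
    · intro hω
      exact absurd hω (by simp)
    · have hfd : (fderiv ℝ fun y : Fin p → ℝ =>
          (∏ i, y i ^ a i) * (∑ i, y i ^ N) ^ q) =
          fun y => ∑ m, Gd p N q a m y •
            ContinuousLinearMap.proj (R := ℝ) (φ := fun _ : Fin p => ℝ) m :=
        funext fun y => (key1 y).fderiv
      rw [hfd]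
      exact key2

theorem stmt_0 (k l p : ℕ) (hk : 0 < k) (hl : 0 < l) (hp : 0 < p) :
    ContDiff ℝ k (fun y : Fin p → ℝ =>
      (∑ i, (y i) ^ (2 * k * l)) ^ ((1 : ℝ) / l)) := by
  have hl' : (0:ℝ) < l := by exact_mod_cast hl
  have h2 : 2 ≤ 2 * k * l := by
    have h := Nat.mul_le_mul (Nat.mul_le_mul (le_refl 2) hk) hl
    simpa using h
  have hEven : Even (2 * k * l) := ⟨k * l, by ring⟩
  have h := key p (2 * k * l) hp h2 hEven k ((1:ℝ) / l) (fun _ => 0)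
    (by rw [div_le_one hl']; exact_mod_cast hl)
    (by
      have hl0 : (l:ℝ) ≠ 0 := ne_of_gt hl'
      have hml : ((2 * k * l : ℕ) : ℝ) * ((1:ℝ) / l) = 2 * k := by
        push_cast
        field_simp
      have hk1 : (1:ℝ) ≤ k := by exact_mod_cast hk
      simp only [Nat.cast_zero, Finset.sum_const, smul_zero, zero_add, hml]
      linarith)
  simpa using h
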